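/- arXiv:2401.03668 — 2 statements merged into one kernel-verified Lean document; each statement's English description precedes it below -/
import Mathlib

section
/- For each integer n ≥ 0, the modified Bessel function satisfies lim_{x→∞} I_n(x) / (x^{-1/2} e^x) = 1/√(2π). -/
open Real Filter MeasureTheory

lemma jordan {u : ℝ} (h0 : 0 ≤ u) (h1 : u ≤ π) : 2 * u ^ 2 / π ^ 2 ≤ 1 - Real.cos u := by
  have hs : u / π ≤ Real.sin (u / 2) := by
    have := Real.mul_le_sin (x := u / 2) (by linarith) (by linarith)
    calc u / π = 2 / π * (u / 2) := by field_simp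
    _ ≤ Real.sin (u / 2) := this
  have hc : Real.cos u = 1 - 2 * Real.sin (u / 2) ^ 2 := by
    have h2 : Real.cos (2 * (u / 2)) = 2 * Real.cos (u / 2) ^ 2 - 1 := Real.cos_two_mul _
    have h3 : Real.cos (u / 2) ^ 2 = 1 - Real.sin (u / 2) ^ 2 := Real.cos_sq' _
    rw [show 2 * (u / 2) = u by ring, h3] at h2
    linarith
  have hpi : (0:ℝ) < π := Real.pi_pos
  have hun : 0 ≤ u / π := by positivity
  have h4 : (u / π) ^ 2 ≤ Real.sin (u / 2) ^ 2 := pow_le_pow_left₀ hun hs 2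
  rw [hc]
  rw [div_pow] at h4
  have h5 : 2 * u ^ 2 / π ^ 2 = 2 * (u ^ 2 / π ^ 2) := by ring
  linarith

lemma sin_slope : Tendsto (fun v : ℝ => Real.sin v / v) (nhdsWithin 0 {0}ᶜ) (nhds 1) := by
  have h := (hasDerivAt_iff_tendsto_slope).mp (Real.hasDerivAt_sin 0)
  rw [Real.cos_zero] at h
  refine h.congr (fun v => ?_)
  simp [slope_def_field, div_eq_inv_mul]

lemma cos_slope : Tendsto (fun u : ℝ => (Real.cos u - 1) / u ^ 2) (nhdsWithin 0 {0}ᶜ)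
    (nhds (-(1/2 : ℝ))) := by
  have hhalf : Tendsto (fun u : ℝ => u / 2) (nhdsWithin 0 {0}ᶜ) (nhdsWithin 0 {0}ᶜ) := by
    refine tendsto_nhdsWithin_iff.mpr ⟨?_, ?_⟩
    · simpa using ((continuous_id.div_const (2:ℝ)).tendsto' 0 0 (by norm_num)).mono_left
        (nhdsWithin_le_nhds (s := {(0:ℝ)}ᶜ))
    · filter_upwards [self_mem_nhdsWithin] with u hu
      simpa using div_ne_zero (by simpa using hu) (two_ne_zero (α := ℝ))
  have h1 : Tendsto (fun u : ℝ => -(1/2 : ℝ) * (Real.sin (u/2) / (u/2)) ^ 2)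
      (nhdsWithin 0 {0}ᶜ) (nhds (-(1/2 : ℝ))) := by
    have := ((sin_slope.comp hhalf).pow 2).const_mul (-(1/2 : ℝ))
    simpa using this
  refine h1.congr' ?_
  filter_upwards [self_mem_nhdsWithin] with u hu
  have hu' : u ≠ 0 := hu
  have hc : Real.cos u = 1 - 2 * Real.sin (u / 2) ^ 2 := by
    have h2 : Real.cos (2 * (u / 2)) = 2 * Real.cos (u / 2) ^ 2 - 1 := Real.cos_two_mul _
    have h3 : Real.cos (u / 2) ^ 2 = 1 - Real.sin (u / 2) ^ 2 := Real.cos_sq' _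
    rw [show 2 * (u / 2) = u by ring, h3] at h2
    linarith
  rw [hc]
  field_simp
  ring

lemma sqrt_tendsto_atTop : Tendsto Real.sqrt atTop atTop := by
  apply tendsto_atTop.2
  intro b
  filter_upwards [eventually_ge_atTop (b ^ 2)] with x hx
  calc b ≤ |b| := le_abs_self b
  _ = Real.sqrt (b ^ 2) := (Real.sqrt_sq_eq_abs b).symm
  _ ≤ Real.sqrt x := Real.sqrt_le_sqrt hx

noncomputable def besselI (n : ℕ) (x : ℝ) : ℝ :=
  (1 / Real.pi) * ∫ θ in (0:ℝ)..Real.pi, Real.exp (x * Real.cos θ) * Real.cos (n * θ)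

set_option maxHeartbeats 1000000 in
theorem besselI_asymptotic (n : ℕ) :
    Tendsto (fun x : ℝ => besselI n x / (x ^ (-(1/2 : ℝ)) * Real.exp x)) atTop
      (nhds (1 / Real.sqrt (2 * Real.pi))) := by
  have hπ : (0:ℝ) < π := Real.pi_pos
  set G : ℝ → ℝ → ℝ := fun x t => Set.indicator (Set.Ioc 0 (π * Real.sqrt x))
    (fun t => Real.exp (x * (Real.cos (t / Real.sqrt x) - 1)) *
      Real.cos ((n:ℝ) * (t / Real.sqrt x))) t with hGdef
  set H : ℝ → ℝ := Set.indicator (Set.Ioi 0) (fun t => Real.exp (-(1/2 : ℝ) * t ^ 2))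
    with hHdef
  -- dominated convergence
  have hint : Tendsto (fun x => ∫ t, G x t) atTop (nhds (∫ t, H t)) := by
    apply tendsto_integral_filter_of_dominated_convergence
      (bound := fun t : ℝ => Real.exp (-(2 / π ^ 2) * t ^ 2))
    · filter_upwards with x
      have hcont : Continuous (fun t : ℝ => Real.exp (x * (Real.cos (t / Real.sqrt x) - 1)) *
          Real.cos ((n:ℝ) * (t / Real.sqrt x))) := by fun_prop
      exact (hcont.aestronglyMeasurable).indicator measurableSet_Ioc
    · filter_upwards [eventually_ge_atTop (1:ℝ)] with x hx
      apply ae_of_all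
      intro t
      have hx0 : (0:ℝ) < x := lt_of_lt_of_le one_pos hx
      have hsx : (0:ℝ) < Real.sqrt x := Real.sqrt_pos.mpr hx0
      by_cases ht : t ∈ Set.Ioc 0 (π * Real.sqrt x)
      · rw [hGdef]
        simp only [Set.indicator_of_mem ht]
        set u := t / Real.sqrt x with hu
        have hu0 : 0 ≤ u := le_of_lt (div_pos ht.1 hsx)
        have hu1 : u ≤ π := by
          rw [hu, div_le_iff₀ hsx]; exact ht.2
        have hj := jordan hu0 hu1
        have hxu : x * u ^ 2 = t ^ 2 := by
          rw [hu, div_pow, Real.sq_sqrt hx0.le]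
          field_simp
        rw [norm_mul, Real.norm_eq_abs, Real.norm_eq_abs, Real.abs_exp]
        calc Real.exp (x * (Real.cos u - 1)) * |Real.cos ((n:ℝ) * u)|
            ≤ Real.exp (x * (Real.cos u - 1)) * 1 :=
              mul_le_mul_of_nonneg_left (Real.abs_cos_le_one _) (Real.exp_pos _).le
          _ = Real.exp (x * (Real.cos u - 1)) := mul_one _
          _ ≤ Real.exp (-(2 / π ^ 2) * t ^ 2) := by
              apply Real.exp_le_exp.2
              have h6 : x * (Real.cos u - 1) ≤ x * (-(2 * u ^ 2 / π ^ 2)) :=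
                mul_le_mul_of_nonneg_left (by linarith) hx0.le
              have h7 : x * (-(2 * u ^ 2 / π ^ 2)) = -(2 / π ^ 2) * (x * u ^ 2) := by ring
              rw [h7, hxu] at h6
              exact h6
      · rw [hGdef]
        simp only [Set.indicator_of_notMem ht]
        simp [Real.exp_pos, (Real.exp_pos _).le]
    · exact integrable_exp_neg_mul_sq (by positivity)
    · apply ae_of_all
      intro t
      rcases le_or_gt t 0 with ht | ht
      · have hG0 : ∀ x : ℝ, G x t = 0 := by
          intro x
          apply Set.indicator_of_notMem
          simp only [Set.mem_Ioc, not_and_or, not_lt]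
          exact Or.inl ht
        have hH0 : H t = 0 := Set.indicator_of_notMem (by simpa using ht) _
        simp only [hG0, hH0]
        exact tendsto_const_nhds
      · have hH1 : H t = Real.exp (-(1/2 : ℝ) * t ^ 2) := Set.indicator_of_mem ht _
        rw [hH1]
        have hu : Tendsto (fun x : ℝ => t / Real.sqrt x) atTop (nhdsWithin 0 {0}ᶜ) := by
          refine tendsto_nhdsWithin_iff.mpr ⟨?_, ?_⟩
          · exact Tendsto.div_atTop tendsto_const_nhds sqrt_tendsto_atTop
          · filter_upwards [eventually_gt_atTop (0:ℝ)] with x hx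
            have hsx : (0:ℝ) < Real.sqrt x := Real.sqrt_pos.mpr hx
            simpa using (div_pos ht hsx).ne'
        have hA : Tendsto (fun x : ℝ => x * (Real.cos (t / Real.sqrt x) - 1)) atTop
            (nhds (-(1/2 : ℝ) * t ^ 2)) := by
          have h1 := (cos_slope.comp hu).const_mul (t ^ 2)
          rw [show t ^ 2 * -(1/2 : ℝ) = -(1/2 : ℝ) * t ^ 2 by ring] at h1
          refine h1.congr' ?_
          filter_upwards [eventually_gt_atTop (0:ℝ)] with x hx
          have hsx : (0:ℝ) < Real.sqrt x := Real.sqrt_pos.mpr hx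
          have hsq : (t / Real.sqrt x) ^ 2 = t ^ 2 / x := by
            rw [div_pow, Real.sq_sqrt hx.le]
          simp only [Function.comp_apply, hsq]
          rw [div_div_eq_mul_div]
          field_simp
        have hB : Tendsto (fun x : ℝ => Real.cos ((n:ℝ) * (t / Real.sqrt x))) atTop
            (nhds 1) := by
          have h2 : Tendsto (fun x : ℝ => (n:ℝ) * (t / Real.sqrt x)) atTop (nhds 0) := by
            simpa using ((hu.mono_right nhdsWithin_le_nhds).const_mul ((n:ℝ)))
          exact (Real.continuous_cos.tendsto' 0 1 (by simp)).comp h2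
        have hmain := ((Real.continuous_exp.tendsto _).comp hA).mul hB
        rw [mul_one] at hmain
        refine hmain.congr' ?_
        have h1 : Tendsto (fun x : ℝ => π * Real.sqrt x) atTop atTop :=
          Tendsto.const_mul_atTop hπ sqrt_tendsto_atTop
        filter_upwards [h1.eventually_ge_atTop t] with x hx1
        simp only [Function.comp_apply, hGdef]
        exact (Set.indicator_of_mem (Set.mem_Ioc.mpr ⟨ht, hx1⟩)
          (fun t => Real.exp (x * (Real.cos (t / Real.sqrt x) - 1)) *
            Real.cos ((n:ℝ) * (t / Real.sqrt x)))).symm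
  -- value of limit integral
  have hHval : ∫ t, H t = Real.sqrt (π / (1/2)) / 2 := by
    rw [hHdef, MeasureTheory.integral_indicator measurableSet_Ioi]
    exact integral_gaussian_Ioi (1/2)
  rw [hHval] at hint
  have hkey := hint.const_mul (1/π)
  have hval : (1/π) * (Real.sqrt (π / (1/2)) / 2) = 1 / Real.sqrt (2 * π) := by
    have h2 : π / (1/2 : ℝ) = 2 * π := by ring
    rw [h2]
    have h2π : (0:ℝ) < 2 * π := by positivity
    have hs : (0:ℝ) < Real.sqrt (2 * π) := Real.sqrt_pos.2 h2π
    rw [eq_div_iff hs.ne']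
    have hms := Real.mul_self_sqrt h2π.le
    have h9 : 1/π * (Real.sqrt (2*π)/2) * Real.sqrt (2*π)
        = (Real.sqrt (2*π) * Real.sqrt (2*π)) / (2*π) := by
      field_simp
    rw [h9, hms, div_self h2π.ne']
  rw [hval] at hkey
  refine hkey.congr' ?_
  filter_upwards [eventually_ge_atTop (1:ℝ)] with x hx
  have hx0 : (0:ℝ) < x := lt_of_lt_of_le one_pos hx
  have hsx : (0:ℝ) < Real.sqrt x := Real.sqrt_pos.mpr hx0
  have hG : ∫ t, G x t = Real.sqrt x *
      ((∫ θ in (0:ℝ)..π, Real.exp (x * Real.cos θ) * Real.cos ((n:ℝ) * θ)) / Real.exp x) := by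
    rw [hGdef]
    rw [MeasureTheory.integral_indicator measurableSet_Ioc]
    rw [← intervalIntegral.integral_of_le (by positivity : (0:ℝ) ≤ π * Real.sqrt x)]
    have hcv := intervalIntegral.integral_comp_div (a := 0) (b := π * Real.sqrt x)
      (c := Real.sqrt x)
      (f := fun θ => Real.exp (x * (Real.cos θ - 1)) * Real.cos ((n:ℝ) * θ)) hsx.ne'
    rw [hcv, zero_div, mul_div_cancel_right₀ _ hsx.ne', smul_eq_mul]
    congr 1
    rw [← intervalIntegral.integral_div]
    apply intervalIntegral.integral_congr
    intro θ _
    simp only [mul_sub, mul_one, Real.exp_sub]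
    ring
  rw [hG]
  rw [besselI]
  rw [show (x:ℝ) ^ (-(1/2 : ℝ)) = (Real.sqrt x)⁻¹ by
    rw [Real.rpow_neg hx0.le, ← Real.sqrt_eq_rpow]]
  field_simp
end

section
/- Under the power iteration setting with |σ₂| < |σ₁|, for all k ≥ 1, |q_k · u₁| ≥ 1 - (1/2)(σ₂/σ₁)^{2k} (1-α₁²)/α₁². -/
open MeasureTheory Real
open scoped RealInnerProductSpace

private lemma aux_bernoulli_cube (x : ℝ) (hx : 0 ≤ x) (hx3 : x ≤ 3) :
    (1 + x) * (1 - 1/2 * x) ^ 2 ≤ 1 := by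
  nlinarith [mul_nonneg (mul_nonneg hx hx) (by linarith : (0:ℝ) ≤ 3 - x)]

theorem power_iteration_overlap_lower {N : ℕ} (hN : 2 ≤ N)
    (σ : Fin N → ℝ)
    (hord : ∀ i j : Fin N, i ≤ j → |σ j| ≤ |σ i|)
    (hgap : |σ ⟨1, by omega⟩| < |σ ⟨0, by omega⟩|)
    (hσ1 : σ ⟨0, by omega⟩ ≠ 0)
    (u : OrthonormalBasis (Fin N) ℝ (EuclideanSpace ℝ (Fin N)))
    (J : EuclideanSpace ℝ (Fin N) → EuclideanSpace ℝ (Fin N))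
    (hJ : ∀ x, J x = ∑ i, (σ i * ⟪u i, x⟫) • u i)
    (α : Fin N → ℝ) (q : ℕ → EuclideanSpace ℝ (Fin N))
    (hq0 : q 0 = ∑ i, α i • u i) (hnorm : ‖q 0‖ = 1)
    (hα1 : α ⟨0, by omega⟩ ≠ 0)
    (hrec : ∀ k : ℕ, q (k + 1) = ‖J (q k)‖⁻¹ • J (q k)) :
    ∀ k : ℕ, 1 ≤ k →
      |⟪q k, u ⟨0, by omega⟩⟫| ≥
        1 - (1 / 2) * (σ ⟨1, by omega⟩ / σ ⟨0, by omega⟩) ^ (2 * k) *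
            ((1 - α ⟨0, by omega⟩ ^ 2) / α ⟨0, by omega⟩ ^ 2) := by
  intro k hk
  set i0 : Fin N := ⟨0, by omega⟩ with hi0
  set i1 : Fin N := ⟨1, by omega⟩ with hi1
  have hun : Orthonormal ℝ u := u.orthonormal
  have hite := orthonormal_iff_ite.mp hun
  -- coefficient extraction
  have coeff : ∀ (c : Fin N → ℝ) (j : Fin N), ⟪∑ i, c i • u i, u j⟫ = c j := by
    intro c j
    rw [sum_inner]
    simp only [real_inner_smul_left, hite]
    simp
  -- norm squared of a coordinate combination
  have normsq : ∀ (c : Fin N → ℝ), ‖∑ i, c i • u i‖ ^ 2 = ∑ i, c i ^ 2 := by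
    intro c
    rw [← real_inner_self_eq_norm_sq, sum_inner]
    refine Finset.sum_congr rfl fun i _ => ?_
    rw [real_inner_smul_left, real_inner_comm, coeff]
    ring
  -- the unnormalized iterates
  set v : ℕ → EuclideanSpace ℝ (Fin N) := fun k => ∑ i, (σ i ^ k * α i) • u i with hv
  have hv0 : v 0 = q 0 := by
    rw [hq0]; simp [hv]
  have hvc : ∀ m j, ⟪v m, u j⟫ = σ j ^ m * α j := fun m j => coeff _ j
  have hvnsq : ∀ m, ‖v m‖ ^ 2 = ∑ i, (σ i ^ m * α i) ^ 2 := fun m => normsq _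
  have hvpos : ∀ m, 0 < ‖v m‖ := by
    intro m
    have hne : v m ≠ 0 := by
      intro h
      have := hvc m i0
      rw [h, inner_zero_left] at this
      exact (mul_ne_zero (pow_ne_zero m hσ1) hα1) this.symm
    exact norm_pos_iff.mpr hne
  -- J acts diagonally
  have hJv : ∀ m, J (v m) = v (m + 1) := by
    intro m
    rw [hJ]
    refine Finset.sum_congr rfl fun i _ => ?_
    rw [real_inner_comm, hvc]
    ring_nf
  have hJsmul : ∀ (c : ℝ) x, J (c • x) = c • J x := by
    intro c x
    rw [hJ, hJ, Finset.smul_sum]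
    refine Finset.sum_congr rfl fun i _ => ?_
    rw [real_inner_smul_right, smul_smul]
    ring_nf
  -- the iterates are normalized versions of v
  have hqk : ∀ m, q m = ‖v m‖⁻¹ • v m := by
    intro m
    induction m with
    | zero => rw [hv0, hnorm, inv_one, one_smul]
    | succ m ih =>
      rw [hrec, ih, hJsmul, hJv, norm_smul, norm_inv, norm_norm, mul_inv, inv_inv,
        smul_smul]
      congr 1
      field_simp [(hvpos m).ne', (hvpos (m+1)).ne']
  -- key quantities
  have hα0sq : 0 < α i0 ^ 2 :=
    lt_of_le_of_ne (sq_nonneg _) (Ne.symm (pow_ne_zero 2 hα1))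
  -- sum of squares of α is 1
  have hαsum : ∑ i, α i ^ 2 = 1 := by
    have h1 : ‖q 0‖ ^ 2 = 1 := by rw [hnorm]; norm_num
    rw [hq0, normsq] at h1
    exact h1
  have hmem : i0 ∈ Finset.univ := Finset.mem_univ i0
  have hrest : ∑ i ∈ Finset.univ.erase i0, α i ^ 2 = 1 - α i0 ^ 2 := by
    have h2 := Finset.add_sum_erase Finset.univ (fun i => α i ^ 2) hmem
    simp only [hαsum] at h2
    linarith
  have hα0le : α i0 ^ 2 ≤ 1 := by
    have h := Finset.sum_nonneg (fun i (_ : i ∈ Finset.univ.erase i0) => sq_nonneg (α i))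
    rw [hrest] at h
    linarith
  -- bound the norm of v k
  set A : ℝ := (σ i0 ^ k * α i0) ^ 2 with hA
  have hApos : 0 < A := by
    apply lt_of_le_of_ne (sq_nonneg _)
    exact Ne.symm (pow_ne_zero 2 (mul_ne_zero (pow_ne_zero k hσ1) hα1))
  have hbound : ‖v k‖ ^ 2 ≤ A + (σ i1 ^ 2) ^ k * (1 - α i0 ^ 2) := by
    rw [hvnsq]
    rw [← Finset.add_sum_erase Finset.univ (fun i => (σ i ^ k * α i) ^ 2) hmem]
    have : ∑ i ∈ Finset.univ.erase i0, (σ i ^ k * α i) ^ 2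
        ≤ ∑ i ∈ Finset.univ.erase i0, (σ i1 ^ 2) ^ k * α i ^ 2 := by
      refine Finset.sum_le_sum fun i hi => ?_
      have hine : i ≠ i0 := Finset.ne_of_mem_erase hi
      have h1i : i1 ≤ i := by
        rw [hi1]
        have : (i : ℕ) ≠ 0 := fun h => hine (Fin.ext h)
        exact Fin.mk_le_of_le_val (by omega)
      have habs : |σ i| ≤ |σ i1| := hord i1 i h1i
      have hsq : σ i ^ 2 ≤ σ i1 ^ 2 := by
        rw [← sq_abs (σ i), ← sq_abs (σ i1)]
        exact pow_le_pow_left₀ (abs_nonneg _) habs 2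
      have : (σ i ^ k) ^ 2 ≤ (σ i1 ^ 2) ^ k := by
        rw [← pow_mul, ← pow_mul, mul_comm k 2]
        rw [pow_mul, pow_mul]
        exact pow_le_pow_left₀ (sq_nonneg _) hsq k
      calc (σ i ^ k * α i) ^ 2 = (σ i ^ k) ^ 2 * α i ^ 2 := by ring
        _ ≤ (σ i1 ^ 2) ^ k * α i ^ 2 := by nlinarith [sq_nonneg (α i)]
    calc A + ∑ i ∈ Finset.univ.erase i0, (σ i ^ k * α i) ^ 2
        ≤ A + ∑ i ∈ Finset.univ.erase i0, (σ i1 ^ 2) ^ k * α i ^ 2 := by linarith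
      _ = A + (σ i1 ^ 2) ^ k * (1 - α i0 ^ 2) := by rw [← Finset.mul_sum, hrest]
  -- express the overlap
  have hover : |⟪q k, u i0⟫| = ‖v k‖⁻¹ * |σ i0 ^ k * α i0| := by
    rw [hqk k, real_inner_smul_left, hvc, abs_mul, abs_inv, abs_norm]
  set x : ℝ := (σ i1 / σ i0) ^ (2 * k) * ((1 - α i0 ^ 2) / α i0 ^ 2) with hx
  have hxB : A * x = (σ i1 ^ 2) ^ k * (1 - α i0 ^ 2) := by
    rw [hx, hA]
    field_simp
    have hc : σ i0 ^ (k * 2) * (σ i0)⁻¹ ^ (k * 2) = 1 := by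
      rw [← mul_pow, mul_inv_cancel₀ hσ1, one_pow]
    linear_combination (σ i1 ^ (k * 2) - σ i1 ^ (k * 2) * α i0 ^ 2) * hc
  have hxnn : 0 ≤ x := by
    apply mul_nonneg
    · rw [mul_comm 2 k, pow_mul]; positivity
    · exact div_nonneg (by linarith) (le_of_lt hα0sq)
  have hbound2 : ‖v k‖ ^ 2 ≤ A * (1 + x) := by
    rw [mul_add, mul_one, hxB]; exact hbound
  have hMsq : |σ i0 ^ k * α i0| ^ 2 = A := by rw [sq_abs]
  have hn := hvpos k
  rw [hover, ge_iff_le, mul_assoc, ← hx]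
  rcases le_or_gt (1 - 1/2 * x) 0 with hneg | hpos
  · have h0 : (0:ℝ) ≤ ‖v k‖⁻¹ * |σ i0 ^ k * α i0| := by positivity
    linarith
  · rw [le_inv_mul_iff₀ hn]
    have h1 : (1 + x) * (1 - 1/2 * x) ^ 2 ≤ 1 :=
      aux_bernoulli_cube x hxnn (by linarith)
    have hsq : (‖v k‖ * (1 - 1/2 * x)) ^ 2 ≤ A := by
      calc (‖v k‖ * (1 - 1/2 * x)) ^ 2 = ‖v k‖ ^ 2 * (1 - 1/2 * x) ^ 2 := by ring
        _ ≤ A * (1 + x) * (1 - 1/2 * x) ^ 2 :=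
            mul_le_mul_of_nonneg_right hbound2 (sq_nonneg _)
        _ = A * ((1 + x) * (1 - 1/2 * x) ^ 2) := by ring
        _ ≤ A * 1 := mul_le_mul_of_nonneg_left h1 hApos.le
        _ = A := mul_one A
    have hM0 : 0 ≤ |σ i0 ^ k * α i0| := abs_nonneg _
    have hsq' : (‖v k‖ * (1 - 1/2 * x)) ^ 2 ≤ |σ i0 ^ k * α i0| ^ 2 := by
      rw [hMsq]; exact hsq
    exact le_of_pow_le_pow_left₀ two_ne_zero hM0 hsq'
end
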